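/- (Orthogonality of eigenfunctions on (a,b).) Let a, b ∈ I with a ≤ s0 ≤ b, let r : I → ℝ be continuous on [a,b], and let a1, a2, b1, b2 be real numbers with |a1| + |a2| ≠ 0 and |b1| + |b2| ≠ 0. Suppose λ1, λ2 ∈ ℂ with λ1 ≠ λ2, and φ1, φ2 : I → ℂ belong to L²_β(a,b), are continuous and differentiable at s0, have D_β φj differentiable at s0 and D_β φj, D_{β^{-1}}D_β φj bounded on {β^k(a), β^k(b) : k ∈ ℕ₀} ∪ {s0}, satisfy ℓ_β φj(t) = λj·φj(t) for all t in {β^k(a), β^k(b) : k ∈ ℕ₀} ∪ {s0}, the boundary conditions a1·φj(a) + a2·(D_{β^{-1}}φj)(a) = 0 and b1·φj(b) + b2·(D_{β^{-1}}φj)(b) = 0, and ∫_{a}^{b} |φj|² d_β > 0, for j = 1, 2. Then ⟨φ1, φ2⟩ = ∫_{a}^{b} φ1(t)·conj(φ2(t)) d_β t = 0. -/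

import Mathlib

open Function Set ComplexConjugate

/-- The β-derivative `D_β f` of `f : ℝ → ℂ`:
`(f (β t) - f t) / (β t - t)` for `t ≠ s0`, and `f' s0` at `t = s0`. -/
noncomputable def Dq (β : ℝ → ℝ) (s0 : ℝ) (f : ℝ → ℂ) (t : ℝ) : ℂ :=
  if t = s0 then deriv f s0 else (f (β t) - f t) / ((β t : ℂ) - (t : ℂ))

/-- The β-integral `∫_{s0}^{x} f d_β = ∑_{k} (β^k x - β^{k+1} x) f (β^k x)` (complex-valued). -/
noncomputable def betaInt (β : ℝ → ℝ) (x : ℝ) (f : ℝ → ℂ) : ℂ :=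
  ∑' k : ℕ, ((β^[k] x - β^[k + 1] x : ℝ) : ℂ) * f (β^[k] x)

/-- The β-integral `∫_{s0}^{x} f d_β` for a real-valued integrand. -/
noncomputable def betaIntR (β : ℝ → ℝ) (x : ℝ) (f : ℝ → ℝ) : ℝ :=
  ∑' k : ℕ, (β^[k] x - β^[k + 1] x) * f (β^[k] x)

/-- `∫_a^b f d_β := ∫_{s0}^b f d_β - ∫_{s0}^a f d_β`. -/
noncomputable def betaIntAB (β : ℝ → ℝ) (a b : ℝ) (f : ℝ → ℂ) : ℂ :=
  betaInt β b f - betaInt β a f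

/-- `∫_a^b f d_β` for a real-valued integrand. -/
noncomputable def betaIntRAB (β : ℝ → ℝ) (a b : ℝ) (f : ℝ → ℝ) : ℝ :=
  betaIntR β b f - betaIntR β a f

/-- `D_β β⁻¹`, viewed as a complex-valued function. -/
noncomputable def DbinvC (β βinv : ℝ → ℝ) (s0 : ℝ) : ℝ → ℂ :=
  Dq β s0 fun u => (βinv u : ℂ)

/-- The β-Sturm–Liouville operator
`ℓ_β y (t) = -(D_β β⁻¹)(t) · (D_{β⁻¹} (D_β y))(t) + r t · y t`. -/
noncomputable def ellBeta (β βinv : ℝ → ℝ) (s0 : ℝ) (r : ℝ → ℝ) (y : ℝ → ℂ) (t : ℝ) : ℂ :=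
  -(DbinvC β βinv s0 t) * Dq βinv s0 (Dq β s0 y) t + (r t : ℂ) * y t

/-- The β-Wronskian `[y,z](t) = y t · (D_{β⁻¹} z) t - z t · (D_{β⁻¹} y) t`. -/
noncomputable def wronk (βinv : ℝ → ℝ) (s0 : ℝ) (y z : ℝ → ℂ) (t : ℝ) : ℂ :=
  y t * Dq βinv s0 z t - z t * Dq βinv s0 y t

/-- The β-exponential `e_{p,β}(t) = 1 / ∏_k (1 - p(β^k t)(β^k t - β^{k+1} t))`. -/
noncomputable def ebeta (β : ℝ → ℝ) (p : ℝ → ℂ) (t : ℝ) : ℂ :=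
  1 / ∏' k : ℕ, (1 - p (β^[k] t) * ((β^[k] t - β^[k + 1] t : ℝ) : ℂ))

/-- The β-exponential `E_{p,β}(t) = ∏_k (1 + p(β^k t)(β^k t - β^{k+1} t))`. -/
noncomputable def Ebeta (β : ℝ → ℝ) (p : ℝ → ℂ) (t : ℝ) : ℂ :=
  ∏' k : ℕ, (1 + p (β^[k] t) * ((β^[k] t - β^[k + 1] t : ℝ) : ℂ))

/-- `sin_{p,β}(t) = (e_{ip,β}(t) - e_{-ip,β}(t)) / (2i)`. -/
noncomputable def sinBeta (β : ℝ → ℝ) (p : ℝ → ℂ) (t : ℝ) : ℂ :=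
  (ebeta β (fun s => Complex.I * p s) t - ebeta β (fun s => -(Complex.I * p s)) t) /
    (2 * Complex.I)

/-- `cos_{p,β}(t) = (e_{ip,β}(t) + e_{-ip,β}(t)) / 2`. -/
noncomputable def cosBeta (β : ℝ → ℝ) (p : ℝ → ℂ) (t : ℝ) : ℂ :=
  (ebeta β (fun s => Complex.I * p s) t + ebeta β (fun s => -(Complex.I * p s)) t) / 2


lemma deriv_conj' (g : ℝ → ℂ) (x : ℝ) :
    deriv (fun s => conj (g s)) x = conj (deriv g x) := by
  by_cases h : DifferentiableAt ℝ g x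
  · have h1 : HasDerivAt g (deriv g x) x := h.hasDerivAt
    have h2 := (Complex.conjCLE.toContinuousLinearMap.hasFDerivAt.comp_hasDerivAt x h1)
    simpa [Complex.conjCLE_apply, Function.comp_def] using h2.deriv
  · have h' : ¬ DifferentiableAt ℝ (fun s => conj (g s)) x := by
      intro hc
      have h2 : DifferentiableAt ℝ (fun s => conj (conj (g s))) x :=
        (Complex.conjCLE.differentiableAt.comp x hc)
      exact h (by simpa using h2)
    rw [deriv_zero_of_not_differentiableAt h, deriv_zero_of_not_differentiableAt h']
    simp

lemma Dq_conj (β : ℝ → ℝ) (s0 : ℝ) (g : ℝ → ℂ) :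
    Dq β s0 (fun s => conj (g s)) = fun t => conj (Dq β s0 g t) := by
  funext t
  by_cases ht : t = s0
  · simp [Dq, ht, deriv_conj']
  · simp [Dq, ht, map_div₀, Complex.conj_ofReal]

lemma DbinvC_real (β βinv : ℝ → ℝ) (s0 : ℝ) (t : ℝ) :
    conj (DbinvC β βinv s0 t) = DbinvC β βinv s0 t := by
  have : (fun s => conj ((βinv s : ℂ))) = fun s => ((βinv s : ℂ)) := by
    funext s; simp [Complex.conj_ofReal]
  have h := congrFun (Dq_conj β s0 (fun u => (βinv u : ℂ))) t
  rw [this] at h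
  unfold DbinvC
  rw [← h]

lemma ellBeta_conj (β βinv : ℝ → ℝ) (s0 : ℝ) (r : ℝ → ℝ) (g : ℝ → ℂ) (t : ℝ) :
    ellBeta β βinv s0 r (fun s => conj (g s)) t = conj (ellBeta β βinv s0 r g t) := by
  unfold ellBeta
  rw [Dq_conj β s0 g, Dq_conj βinv s0 (Dq β s0 g)]
  rw [map_add, map_mul, map_mul, map_neg, DbinvC_real, Complex.conj_ofReal]

lemma lagrange_pt (I : Set ℝ) (β βinv : ℝ → ℝ) (s0 : ℝ)
    (hbij : Set.BijOn β I I) (hinv : Set.InvOn βinv β I I)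
    (hs0I : s0 ∈ I) (hfix : β s0 = s0)
    (huniq : ∀ t ∈ I, (t - s0) * (β t - t) = 0 → t = s0)
    (r : ℝ → ℝ) (f g : ℝ → ℂ)
    (t : ℝ) (ht : t ∈ I) (hts0 : t ≠ s0) :
    (((t : ℝ) - β t : ℝ) : ℂ) *
        (ellBeta β βinv s0 r f t * g t - f t * ellBeta β βinv s0 r g t)
      = wronk βinv s0 f g t - wronk βinv s0 f g (β t) := by
  have hβu : β (βinv t) = t := hinv.2 ht
  have hβinvv : βinv (β t) = t := hinv.1 ht
  have hvt : β t ≠ t := fun h => hts0 (huniq t ht (by rw [h]; ring))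
  have hut : βinv t ≠ t := fun h => hvt ((congrArg β h).symm.trans hβu)
  have hvs0 : β t ≠ s0 := fun h => hts0 (hbij.injOn ht hs0I (h.trans hfix.symm))
  have hus0 : βinv t ≠ s0 := fun h => hts0 (by rw [← hβu, h, hfix])
  have c1 : ((β t : ℂ)) - (t : ℂ) ≠ 0 := sub_ne_zero.2 (by exact_mod_cast hvt)
  have c2 : ((βinv t : ℂ)) - (t : ℂ) ≠ 0 := sub_ne_zero.2 (by exact_mod_cast hut)
  have c1' : (t : ℂ) - (β t : ℂ) ≠ 0 := sub_ne_zero.2 fun h => hvt (by exact_mod_cast h.symm)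
  have c2' : (t : ℂ) - (βinv t : ℂ) ≠ 0 := sub_ne_zero.2 fun h => hut (by exact_mod_cast h.symm)
  simp only [ellBeta, wronk, DbinvC, Dq, if_neg hts0, if_neg hvs0, if_neg hus0, hβu, hβinvv]
  field_simp [c1, c2, c1', c2']
  push_cast
  ring

lemma orbit_ge (I : Set ℝ) (hIconn : I.OrdConnected) (β : ℝ → ℝ) (s0 : ℝ)
    (hmono : StrictMonoOn β I) (hcont : ContinuousOn β I)
    (hbij : Set.BijOn β I I)
    (hs0I : s0 ∈ I) (hfix : β s0 = s0)
    (hsign : ∀ t ∈ I, (t - s0) * (β t - t) ≤ 0)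
    (huniq : ∀ t ∈ I, (t - s0) * (β t - t) = 0 → t = s0)
    (x : ℝ) (hx : x ∈ I) (hx0 : s0 ≤ x) :
    (∀ k, β^[k] x ∈ I ∧ s0 ≤ β^[k] x ∧ β^[k + 1] x ≤ β^[k] x) ∧
      (s0 < x → ∀ k, s0 < β^[k] x) ∧
      Filter.Tendsto (fun k => β^[k] x) Filter.atTop (nhds s0) := by
  have hsub : Set.Icc s0 x ⊆ I := hIconn.out hs0I hx
  have step : ∀ t, t ∈ I → s0 ≤ t → β t ∈ I ∧ s0 ≤ β t ∧ β t ≤ t := by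
    intro t htI ht0
    refine ⟨hbij.mapsTo htI, ?_, ?_⟩
    · rcases eq_or_lt_of_le ht0 with h | h
      · rw [← h, hfix]
      · exact le_of_lt (hfix ▸ hmono hs0I htI h)
    · rcases eq_or_lt_of_le ht0 with h | h
      · rw [← h, hfix]
      · nlinarith [hsign t htI]
  have key2 : ∀ k, β^[k] x ∈ I ∧ s0 ≤ β^[k] x := by
    intro k; induction k with
    | zero => exact ⟨hx, hx0⟩
    | succ n ih =>
      rw [Function.iterate_succ_apply']
      exact ⟨(step _ ih.1 ih.2).1, (step _ ih.1 ih.2).2.1⟩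
  have key : ∀ k, β^[k] x ∈ I ∧ s0 ≤ β^[k] x ∧ β^[k + 1] x ≤ β^[k] x := by
    intro k
    refine ⟨(key2 k).1, (key2 k).2, ?_⟩
    rw [Function.iterate_succ_apply']
    exact (step _ (key2 k).1 (key2 k).2).2.2
  have hstrict : s0 < x → ∀ k, s0 < β^[k] x := by
    intro hlt k; induction k with
    | zero => exact hlt
    | succ n ih =>
      rw [Function.iterate_succ_apply']
      calc s0 = β s0 := hfix.symm
      _ < β (β^[n] x) := hmono hs0I (key2 n).1 ih
  refine ⟨key, hstrict, ?_⟩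
  have hant : Antitone fun k => β^[k] x := antitone_nat_of_succ_le fun n => (key n).2.2
  have hbdd : BddBelow (Set.range fun k => β^[k] x) := by
    refine ⟨s0, ?_⟩
    rintro y ⟨k, rfl⟩
    exact (key2 k).2
  have hconv := tendsto_atTop_ciInf hant hbdd
  set L := ⨅ k, β^[k] x with hLdef
  have hL0 : s0 ≤ L := le_ciInf fun k => (key2 k).2
  have hLx : L ≤ x := by simpa using ciInf_le hbdd 0
  have hLI : L ∈ I := hsub ⟨hL0, hLx⟩
  have h1 : Filter.Tendsto (fun k => β (β^[k] x)) Filter.atTop (nhds (β L)) := by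
    apply (hcont L hLI).tendsto.comp
    rw [tendsto_nhdsWithin_iff]
    exact ⟨hconv, Filter.Eventually.of_forall fun k => (key2 k).1⟩
  have h2 : Filter.Tendsto (fun k => β^[k + 1] x) Filter.atTop (nhds (β L)) := by
    simpa [Function.iterate_succ_apply'] using h1
  have h3 : Filter.Tendsto (fun k => β^[k + 1] x) Filter.atTop (nhds L) :=
    hconv.comp (Filter.tendsto_add_atTop_nat 1)
  have hβL : β L = L := tendsto_nhds_unique h2 h3
  have hLs0 : L = s0 := huniq L hLI (by rw [hβL]; ring)
  rw [← hLs0]; exact hconv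

lemma orbit_le (I : Set ℝ) (hIconn : I.OrdConnected) (β : ℝ → ℝ) (s0 : ℝ)
    (hmono : StrictMonoOn β I) (hcont : ContinuousOn β I)
    (hbij : Set.BijOn β I I)
    (hs0I : s0 ∈ I) (hfix : β s0 = s0)
    (hsign : ∀ t ∈ I, (t - s0) * (β t - t) ≤ 0)
    (huniq : ∀ t ∈ I, (t - s0) * (β t - t) = 0 → t = s0)
    (x : ℝ) (hx : x ∈ I) (hx0 : x ≤ s0) :
    (∀ k, β^[k] x ∈ I ∧ β^[k] x ≤ s0 ∧ β^[k] x ≤ β^[k + 1] x) ∧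
      (x < s0 → ∀ k, β^[k] x < s0) ∧
      Filter.Tendsto (fun k => β^[k] x) Filter.atTop (nhds s0) := by
  have hsub : Set.Icc x s0 ⊆ I := hIconn.out hx hs0I
  have step : ∀ t, t ∈ I → t ≤ s0 → β t ∈ I ∧ β t ≤ s0 ∧ t ≤ β t := by
    intro t htI ht0
    refine ⟨hbij.mapsTo htI, ?_, ?_⟩
    · rcases eq_or_lt_of_le ht0 with h | h
      · rw [h, hfix]
      · exact le_of_lt (hfix ▸ hmono htI hs0I h)
    · rcases eq_or_lt_of_le ht0 with h | h
      · rw [h, hfix]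
      · nlinarith [hsign t htI]
  have key2 : ∀ k, β^[k] x ∈ I ∧ β^[k] x ≤ s0 := by
    intro k; induction k with
    | zero => exact ⟨hx, hx0⟩
    | succ n ih =>
      rw [Function.iterate_succ_apply']
      exact ⟨(step _ ih.1 ih.2).1, (step _ ih.1 ih.2).2.1⟩
  have key : ∀ k, β^[k] x ∈ I ∧ β^[k] x ≤ s0 ∧ β^[k] x ≤ β^[k + 1] x := by
    intro k
    refine ⟨(key2 k).1, (key2 k).2, ?_⟩
    rw [Function.iterate_succ_apply']
    exact (step _ (key2 k).1 (key2 k).2).2.2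
  have hstrict : x < s0 → ∀ k, β^[k] x < s0 := by
    intro hlt k; induction k with
    | zero => exact hlt
    | succ n ih =>
      rw [Function.iterate_succ_apply']
      calc β (β^[n] x) < β s0 := hmono (key2 n).1 hs0I ih
      _ = s0 := hfix
  refine ⟨key, hstrict, ?_⟩
  have hmon : Monotone fun k => β^[k] x := monotone_nat_of_le_succ fun n => (key n).2.2
  have hbdd : BddAbove (Set.range fun k => β^[k] x) := by
    refine ⟨s0, ?_⟩
    rintro y ⟨k, rfl⟩
    exact (key2 k).2
  have hconv := tendsto_atTop_ciSup hmon hbdd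
  set L := ⨆ k, β^[k] x with hLdef
  have hL0 : L ≤ s0 := ciSup_le fun k => (key2 k).2
  have hLx : x ≤ L := by simpa using le_ciSup hbdd 0
  have hLI : L ∈ I := hsub ⟨hLx, hL0⟩
  have h1 : Filter.Tendsto (fun k => β (β^[k] x)) Filter.atTop (nhds (β L)) := by
    apply (hcont L hLI).tendsto.comp
    rw [tendsto_nhdsWithin_iff]
    exact ⟨hconv, Filter.Eventually.of_forall fun k => (key2 k).1⟩
  have h2 : Filter.Tendsto (fun k => β^[k + 1] x) Filter.atTop (nhds (β L)) := by
    simpa [Function.iterate_succ_apply'] using h1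
  have h3 : Filter.Tendsto (fun k => β^[k + 1] x) Filter.atTop (nhds L) :=
    hconv.comp (Filter.tendsto_add_atTop_nat 1)
  have hβL : β L = L := tendsto_nhds_unique h2 h3
  have hLs0 : L = s0 := huniq L hLI (by rw [hβL]; ring)
  rw [← hLs0]; exact hconv

lemma Dq_inv_eq (I : Set ℝ) (β βinv : ℝ → ℝ) (s0 : ℝ)
    (hbij : Set.BijOn β I I) (hinv : Set.InvOn βinv β I I)
    (hs0I : s0 ∈ I) (hfix : β s0 = s0)
    (huniq : ∀ t ∈ I, (t - s0) * (β t - t) = 0 → t = s0)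
    (h : ℝ → ℂ) (t : ℝ) (ht : t ∈ I) (hts0 : t ≠ s0) :
    Dq βinv s0 h t = Dq β s0 h (βinv t) := by
  have hβu : β (βinv t) = t := hinv.2 ht
  have hvt : β t ≠ t := fun hh => hts0 (huniq t ht (by rw [hh]; ring))
  have hut : βinv t ≠ t := fun hh => hvt ((congrArg β hh).symm.trans hβu)
  have hus0 : βinv t ≠ s0 := fun hh => hts0 (by rw [← hβu, hh, hfix])
  have c2 : ((βinv t : ℂ)) - (t : ℂ) ≠ 0 := sub_ne_zero.2 (by exact_mod_cast hut)
  have c2' : (t : ℂ) - ((βinv t : ℂ)) ≠ 0 := sub_ne_zero.2 fun hh => hut (by exact_mod_cast hh.symm)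
  simp only [Dq, if_neg hts0, if_neg hus0, hβu]
  rw [div_eq_div_iff c2 c2']
  ring

lemma side_identity (I : Set ℝ) (β βinv : ℝ → ℝ) (s0 : ℝ)
    (hbij : Set.BijOn β I I) (hinv : Set.InvOn βinv β I I)
    (hs0I : s0 ∈ I) (hfix : β s0 = s0)
    (huniq : ∀ t ∈ I, (t - s0) * (β t - t) = 0 → t = s0)
    (r : ℝ → ℝ) (f g : ℝ → ℂ) (μ ν : ℂ) (x : ℝ)
    (horbI : ∀ k, β^[k] x ∈ I)
    (horbne : x ≠ s0 → ∀ k, β^[k] x ≠ s0)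
    (hlim : Filter.Tendsto (fun k => β^[k] x) Filter.atTop (nhds s0))
    (heigf : ∀ k, ellBeta β βinv s0 r f (β^[k] x) = μ * f (β^[k] x))
    (heigg : ∀ k, ellBeta β βinv s0 r g (β^[k] x) = ν * g (β^[k] x))
    (hfc : ContinuousAt f s0) (hgc : ContinuousAt g s0)
    (hDfd : DifferentiableAt ℝ (Dq β s0 f) s0) (hDgd : DifferentiableAt ℝ (Dq β s0 g) s0)
    (hsumf : Summable fun k => |β^[k] x - β^[k + 1] x| * ‖f (β^[k] x)‖ ^ 2)
    (hsumg : Summable fun k => |β^[k] x - β^[k + 1] x| * ‖g (β^[k] x)‖ ^ 2) :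
    (μ - conj ν) * betaInt β x (fun t => f t * conj (g t))
      = wronk βinv s0 f (fun s => conj (g s)) x
        - (f s0 * conj (deriv g s0) - conj (g s0) * deriv f s0) := by
  set gb : ℝ → ℂ := fun s => conj (g s) with hgb
  have hW0 : ∀ t, t = s0 → wronk βinv s0 f gb t
      = f s0 * conj (deriv g s0) - conj (g s0) * deriv f s0 := by
    intro t ht
    rw [ht]
    simp [wronk, Dq, hgb, deriv_conj']
  by_cases hxs0 : x = s0
  · have hfixk : ∀ k : ℕ, β^[k] x = s0 := fun k => by
      rw [hxs0]; exact Function.iterate_fixed hfix k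
    have h0 : betaInt β x (fun t => f t * conj (g t)) = 0 := by
      unfold betaInt
      have hz : ∀ k : ℕ, ((β^[k] x - β^[k + 1] x : ℝ) : ℂ) * (f (β^[k] x) * conj (g (β^[k] x))) = 0 := by
        intro k; rw [hfixk k, hfixk (k + 1)]; simp
      rw [tsum_congr hz, tsum_zero]
    rw [h0, mul_zero, hW0 x hxs0]
    ring
  · have hne : ∀ k, β^[k] x ≠ s0 := horbne hxs0
    -- eigen equation for gb
    have heiggb : ∀ k, ellBeta β βinv s0 r gb (β^[k] x) = conj ν * gb (β^[k] x) := by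
      intro k
      rw [hgb, ellBeta_conj, heigg k, map_mul]
    -- pointwise telescoping
    set T : ℕ → ℂ := fun k => wronk βinv s0 f gb (β^[k] x) with hT
    set F : ℕ → ℂ := fun k => ((β^[k] x - β^[k + 1] x : ℝ) : ℂ) * (f (β^[k] x) * conj (g (β^[k] x))) with hF
    have hstepk : ∀ k, (μ - conj ν) * F k = T k - T (k + 1) := by
      intro k
      have h1 := lagrange_pt I β βinv s0 hbij hinv hs0I hfix huniq r f gb (β^[k] x) (horbI k) (hne k)
      rw [heigf k, heiggb k] at h1
      simp only [hT, hF]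
      rw [Function.iterate_succ_apply' β k x, ← h1]
      simp only [hgb]
      push_cast
      ring
    -- summability of F
    have hsumF : Summable F := by
      apply Summable.of_norm
      apply Summable.of_nonneg_of_le (fun k => norm_nonneg _)
        (fun k => ?_) (((hsumf.add hsumg).div_const 2))
      have : ‖F k‖ = |β^[k] x - β^[k + 1] x| * (‖f (β^[k] x)‖ * ‖g (β^[k] x)‖) := by
        rw [hF]; simp only []
        rw [norm_mul, norm_mul, Complex.norm_real, RCLike.norm_conj]
        ring_nf
        simp [Real.norm_eq_abs]
        ring
      rw [this]
      have h2 : ‖f (β^[k] x)‖ * ‖g (β^[k] x)‖ ≤ (‖f (β^[k] x)‖ ^ 2 + ‖g (β^[k] x)‖ ^ 2) / 2 := by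
        nlinarith [sq_nonneg (‖f (β^[k] x)‖ - ‖g (β^[k] x)‖)]
      have h3 : (0:ℝ) ≤ |β^[k] x - β^[k + 1] x| := abs_nonneg _
      calc |β^[k] x - β^[k + 1] x| * (‖f (β^[k] x)‖ * ‖g (β^[k] x)‖)
          ≤ |β^[k] x - β^[k + 1] x| * ((‖f (β^[k] x)‖ ^ 2 + ‖g (β^[k] x)‖ ^ 2) / 2) :=
            mul_le_mul_of_nonneg_left h2 h3
        _ = (|β^[k] x - β^[k + 1] x| * ‖f (β^[k] x)‖ ^ 2 + |β^[k] x - β^[k + 1] x| * ‖g (β^[k] x)‖ ^ 2) / 2 := by ring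
    -- limit of T
    have hTlim : Filter.Tendsto T Filter.atTop (nhds (f s0 * conj (deriv g s0) - conj (g s0) * deriv f s0)) := by
      have hrw : ∀ n : ℕ, T (n + 1)
          = f (β^[n + 1] x) * conj (Dq β s0 g (β^[n] x)) - conj (g (β^[n + 1] x)) * Dq β s0 f (β^[n] x) := by
        intro n
        have hb : βinv (β^[n + 1] x) = β^[n] x := by
          rw [Function.iterate_succ_apply' β n x]
          exact hinv.1 (horbI n)
        have e1 : Dq βinv s0 gb (β^[n + 1] x) = Dq β s0 gb (β^[n] x) := by
          rw [Dq_inv_eq I β βinv s0 hbij hinv hs0I hfix huniq gb _ (horbI (n + 1)) (hne (n + 1)), hb]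
        have e2 : Dq βinv s0 f (β^[n + 1] x) = Dq β s0 f (β^[n] x) := by
          rw [Dq_inv_eq I β βinv s0 hbij hinv hs0I hfix huniq f _ (horbI (n + 1)) (hne (n + 1)), hb]
        rw [hT]; simp only [wronk]
        rw [e1, e2, hgb]
        rw [congrFun (Dq_conj β s0 g) (β^[n] x)]
      have hlim1 : Filter.Tendsto (fun n => β^[n + 1] x) Filter.atTop (nhds s0) :=
        hlim.comp (Filter.tendsto_add_atTop_nat 1)
      have hconj : Continuous (fun z : ℂ => conj z) := Complex.continuous_conj
      have hmain : Filter.Tendsto (fun n => T (n + 1)) Filter.atTop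
          (nhds (f s0 * conj (Dq β s0 g s0) - conj (g s0) * Dq β s0 f s0)) := by
        rw [show (fun n => T (n + 1)) = fun n =>
            f (β^[n + 1] x) * conj (Dq β s0 g (β^[n] x)) - conj (g (β^[n + 1] x)) * Dq β s0 f (β^[n] x)
          from funext hrw]
        exact ((hfc.tendsto.comp hlim1).mul
            ((hconj.tendsto _).comp (hDgd.continuousAt.tendsto.comp hlim))).sub
          (((hconj.tendsto _).comp (hgc.tendsto.comp hlim1)).mul
            (hDfd.continuousAt.tendsto.comp hlim))
      have hDq0f : Dq β s0 f s0 = deriv f s0 := by simp [Dq]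
      have hDq0g : Dq β s0 g s0 = deriv g s0 := by simp [Dq]
      rw [hDq0f, hDq0g] at hmain
      exact (Filter.tendsto_add_atTop_iff_nat 1).mp hmain
    -- sum of telescoping series
    have hsumG : Summable fun k => (μ - conj ν) * F k := hsumF.mul_left _
    have hpartial : Filter.Tendsto (fun n => ∑ k ∈ Finset.range n, ((μ - conj ν) * F k))
        Filter.atTop (nhds (T 0 - (f s0 * conj (deriv g s0) - conj (g s0) * deriv f s0))) := by
      have : ∀ n, ∑ k ∈ Finset.range n, ((μ - conj ν) * F k) = T 0 - T n := by
        intro n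
        rw [show (fun k => (μ - conj ν) * F k) = fun k => T k - T (k + 1) from funext hstepk]
        exact Finset.sum_range_sub' T n
      rw [funext this]
      exact (tendsto_const_nhds.sub hTlim)
    have htsum : ∑' k, ((μ - conj ν) * F k)
        = T 0 - (f s0 * conj (deriv g s0) - conj (g s0) * deriv f s0) :=
      tendsto_nhds_unique hsumG.hasSum.tendsto_sum_nat hpartial
    rw [tsum_mul_left] at htsum
    have hbi : betaInt β x (fun t => f t * conj (g t)) = ∑' k, F k := rfl
    rw [hbi, htsum, hT]
    simp only [Function.iterate_zero_apply]

lemma wronk_zero (βinv : ℝ → ℝ) (s0 : ℝ) (c1 c2 : ℝ) (hne : |c1| + |c2| ≠ 0)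
    (f gb : ℝ → ℂ) (x : ℝ)
    (h1 : (c1 : ℂ) * f x + (c2 : ℂ) * Dq βinv s0 f x = 0)
    (h2 : (c1 : ℂ) * gb x + (c2 : ℂ) * Dq βinv s0 gb x = 0) :
    wronk βinv s0 f gb x = 0 := by
  by_cases hc2 : c2 = 0
  · have hc1 : c1 ≠ 0 := by
      intro h; exact hne (by rw [h, hc2]; simp)
    have hc1' : (c1 : ℂ) ≠ 0 := Complex.ofReal_ne_zero.2 hc1
    rw [hc2] at h1 h2
    simp only [Complex.ofReal_zero, zero_mul, add_zero] at h1 h2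
    have hf : f x = 0 := by
      rcases mul_eq_zero.1 h1 with h | h
      · exact absurd h hc1'
      · exact h
    have hg : gb x = 0 := by
      rcases mul_eq_zero.1 h2 with h | h
      · exact absurd h hc1'
      · exact h
    simp [wronk, hf, hg]
  · have hc2' : (c2 : ℂ) ≠ 0 := Complex.ofReal_ne_zero.2 hc2
    apply mul_left_cancel₀ hc2'
    rw [mul_zero]
    unfold wronk
    linear_combination f x * h2 - gb x * h1

lemma both_sides (I : Set ℝ) (hIconn : I.OrdConnected)
    (β βinv : ℝ → ℝ) (s0 : ℝ)
    (hmono : StrictMonoOn β I) (hcont : ContinuousOn β I)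
    (hbij : Set.BijOn β I I) (hinv : Set.InvOn βinv β I I)
    (hs0I : s0 ∈ I) (hfix : β s0 = s0)
    (hsign : ∀ t ∈ I, (t - s0) * (β t - t) ≤ 0)
    (huniq : ∀ t ∈ I, (t - s0) * (β t - t) = 0 → t = s0)
    (a b : ℝ) (ha : a ∈ I) (hb : b ∈ I) (has0 : a ≤ s0) (hs0b : s0 ≤ b)
    (r : ℝ → ℝ) (f g : ℝ → ℂ) (μ ν : ℂ)
    (hfL2a : Summable fun j : ℕ => (β^[j] a - β^[j + 1] a) * ‖f (β^[j] a)‖ ^ 2)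
    (hfL2b : Summable fun j : ℕ => (β^[j] b - β^[j + 1] b) * ‖f (β^[j] b)‖ ^ 2)
    (hgL2a : Summable fun j : ℕ => (β^[j] a - β^[j + 1] a) * ‖g (β^[j] a)‖ ^ 2)
    (hgL2b : Summable fun j : ℕ => (β^[j] b - β^[j + 1] b) * ‖g (β^[j] b)‖ ^ 2)
    (hfc : ContinuousAt f s0) (hgc : ContinuousAt g s0)
    (hDfd : DifferentiableAt ℝ (Dq β s0 f) s0) (hDgd : DifferentiableAt ℝ (Dq β s0 g) s0)
    (heigf : ∀ t ∈ insert s0 (Set.range (fun j : ℕ => β^[j] a) ∪ Set.range (fun j : ℕ => β^[j] b)), ellBeta β βinv s0 r f t = μ * f t)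
    (heigg : ∀ t ∈ insert s0 (Set.range (fun j : ℕ => β^[j] a) ∪ Set.range (fun j : ℕ => β^[j] b)), ellBeta β βinv s0 r g t = ν * g t) :
    (μ - conj ν) * betaIntAB β a b (fun t => f t * conj (g t))
      = wronk βinv s0 f (fun s => conj (g s)) b - wronk βinv s0 f (fun s => conj (g s)) a := by
  obtain ⟨hkb, hstrictb, hlimb⟩ :=
    orbit_ge I hIconn β s0 hmono hcont hbij hs0I hfix hsign huniq b hb hs0b
  obtain ⟨hka, hstricta, hlima⟩ :=
    orbit_le I hIconn β s0 hmono hcont hbij hs0I hfix hsign huniq a ha has0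
  have hmema : ∀ k : ℕ, β^[k] a ∈ insert s0 (Set.range (fun j : ℕ => β^[j] a) ∪ Set.range (fun j : ℕ => β^[j] b)) :=
    fun k => Set.mem_insert_iff.2 (Or.inr (Or.inl ⟨k, rfl⟩))
  have hmemb : ∀ k : ℕ, β^[k] b ∈ insert s0 (Set.range (fun j : ℕ => β^[j] a) ∪ Set.range (fun j : ℕ => β^[j] b)) :=
    fun k => Set.mem_insert_iff.2 (Or.inr (Or.inr ⟨k, rfl⟩))
  -- signed summability
  have habs_b : ∀ (h : ℝ → ℂ), (Summable fun j : ℕ => (β^[j] b - β^[j + 1] b) * ‖h (β^[j] b)‖ ^ 2) →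
      Summable fun j : ℕ => |β^[j] b - β^[j + 1] b| * ‖h (β^[j] b)‖ ^ 2 := by
    intro h hs
    have : (fun j : ℕ => |β^[j] b - β^[j + 1] b| * ‖h (β^[j] b)‖ ^ 2)
        = fun j : ℕ => (β^[j] b - β^[j + 1] b) * ‖h (β^[j] b)‖ ^ 2 := by
      funext j
      rw [abs_of_nonneg (sub_nonneg.2 (hkb j).2.2)]
    rw [this]; exact hs
  have habs_a : ∀ (h : ℝ → ℂ), (Summable fun j : ℕ => (β^[j] a - β^[j + 1] a) * ‖h (β^[j] a)‖ ^ 2) →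
      Summable fun j : ℕ => |β^[j] a - β^[j + 1] a| * ‖h (β^[j] a)‖ ^ 2 := by
    intro h hs
    have : (fun j : ℕ => |β^[j] a - β^[j + 1] a| * ‖h (β^[j] a)‖ ^ 2)
        = fun j : ℕ => -((β^[j] a - β^[j + 1] a) * ‖h (β^[j] a)‖ ^ 2) := by
      funext j
      rw [abs_of_nonpos (sub_nonpos.2 (hka j).2.2)]
      ring
    rw [this]; exact hs.neg
  have hsb := side_identity I β βinv s0 hbij hinv hs0I hfix huniq r f g μ ν b
    (fun k => (hkb k).1)
    (fun hbs0 k => ne_of_gt (hstrictb (lt_of_le_of_ne hs0b (Ne.symm hbs0)) k))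
    hlimb (fun k => heigf _ (hmemb k)) (fun k => heigg _ (hmemb k))
    hfc hgc hDfd hDgd (habs_b f hfL2b) (habs_b g hgL2b)
  have hsa := side_identity I β βinv s0 hbij hinv hs0I hfix huniq r f g μ ν a
    (fun k => (hka k).1)
    (fun has0' k => ne_of_lt (hstricta (lt_of_le_of_ne has0 has0') k))
    hlima (fun k => heigf _ (hmema k)) (fun k => heigg _ (hmema k))
    hfc hgc hDfd hDgd (habs_a f hfL2a) (habs_a g hgL2a)
  unfold betaIntAB
  rw [mul_sub, hsb, hsa]
  ring
theorem stmt_13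
    (I : Set ℝ) (hIconn : I.OrdConnected)
    (β βinv : ℝ → ℝ) (s0 : ℝ)
    (hmono : StrictMonoOn β I) (hcont : ContinuousOn β I)
    (hbij : Set.BijOn β I I) (hinv : Set.InvOn βinv β I I)
    (hs0I : s0 ∈ I) (hfix : β s0 = s0)
    (hsign : ∀ t ∈ I, (t - s0) * (β t - t) ≤ 0)
    (huniq : ∀ t ∈ I, (t - s0) * (β t - t) = 0 → t = s0)
    (a b : ℝ) (ha : a ∈ I) (hb : b ∈ I) (has0 : a ≤ s0) (hs0b : s0 ≤ b)
    (r : ℝ → ℝ) (hr : ContinuousOn r (Set.Icc a b))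
    (a1 a2 b1 b2 : ℝ) (ha12 : |a1| + |a2| ≠ 0) (hb12 : |b1| + |b2| ≠ 0)
    (lam1 lam2 : ℂ) (hlam : lam1 ≠ lam2) (phi1 phi2 : ℝ → ℂ)
    (hphi1L2a : Summable fun j : ℕ => (β^[j] a - β^[j + 1] a) * ‖phi1 (β^[j] a)‖ ^ 2)
    (hphi1L2b : Summable fun j : ℕ => (β^[j] b - β^[j + 1] b) * ‖phi1 (β^[j] b)‖ ^ 2)
    (hphi1c : ContinuousAt phi1 s0) (hphi1d : DifferentiableAt ℝ phi1 s0)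
    (hDphi1d : DifferentiableAt ℝ (Dq β s0 phi1) s0)
    (hDphi1b : ∃ C, ∀ t ∈ insert s0 (Set.range (fun j : ℕ => β^[j] a) ∪ Set.range (fun j : ℕ => β^[j] b)), ‖Dq β s0 phi1 t‖ ≤ C)
    (hDDphi1b : ∃ C, ∀ t ∈ insert s0 (Set.range (fun j : ℕ => β^[j] a) ∪ Set.range (fun j : ℕ => β^[j] b)), ‖Dq βinv s0 (Dq β s0 phi1) t‖ ≤ C)
    (hphi1eig : ∀ t ∈ insert s0 (Set.range (fun j : ℕ => β^[j] a) ∪ Set.range (fun j : ℕ => β^[j] b)), ellBeta β βinv s0 r phi1 t = lam1 * phi1 t)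
    (hphi1bc1 : (a1 : ℂ) * phi1 a + (a2 : ℂ) * Dq βinv s0 phi1 a = 0)
    (hphi1bc2 : (b1 : ℂ) * phi1 b + (b2 : ℂ) * Dq βinv s0 phi1 b = 0)
    (hphi1pos : 0 < betaIntRAB β a b fun t => ‖phi1 t‖ ^ 2)
    (hphi2L2a : Summable fun j : ℕ => (β^[j] a - β^[j + 1] a) * ‖phi2 (β^[j] a)‖ ^ 2)
    (hphi2L2b : Summable fun j : ℕ => (β^[j] b - β^[j + 1] b) * ‖phi2 (β^[j] b)‖ ^ 2)
    (hphi2c : ContinuousAt phi2 s0) (hphi2d : DifferentiableAt ℝ phi2 s0)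
    (hDphi2d : DifferentiableAt ℝ (Dq β s0 phi2) s0)
    (hDphi2b : ∃ C, ∀ t ∈ insert s0 (Set.range (fun j : ℕ => β^[j] a) ∪ Set.range (fun j : ℕ => β^[j] b)), ‖Dq β s0 phi2 t‖ ≤ C)
    (hDDphi2b : ∃ C, ∀ t ∈ insert s0 (Set.range (fun j : ℕ => β^[j] a) ∪ Set.range (fun j : ℕ => β^[j] b)), ‖Dq βinv s0 (Dq β s0 phi2) t‖ ≤ C)
    (hphi2eig : ∀ t ∈ insert s0 (Set.range (fun j : ℕ => β^[j] a) ∪ Set.range (fun j : ℕ => β^[j] b)), ellBeta β βinv s0 r phi2 t = lam2 * phi2 t)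
    (hphi2bc1 : (a1 : ℂ) * phi2 a + (a2 : ℂ) * Dq βinv s0 phi2 a = 0)
    (hphi2bc2 : (b1 : ℂ) * phi2 b + (b2 : ℂ) * Dq βinv s0 phi2 b = 0)
    (hphi2pos : 0 < betaIntRAB β a b fun t => ‖phi2 t‖ ^ 2) :
    betaIntAB β a b (fun t => phi1 t * conj (phi2 t)) = 0 := by

  classical
  -- boundary conditions for conjugates
  have hconjbc : ∀ (φ : ℝ → ℂ) (c1 c2 x : ℝ),
      (c1 : ℂ) * φ x + (c2 : ℂ) * Dq βinv s0 φ x = 0 →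
      (c1 : ℂ) * (fun s => conj (φ s)) x + (c2 : ℂ) * Dq βinv s0 (fun s => conj (φ s)) x = 0 := by
    intro φ c1 c2 x h
    have h' := congrArg conj h
    rw [map_add, map_mul, map_mul, map_zero, Complex.conj_ofReal, Complex.conj_ofReal] at h'
    simpa [congrFun (Dq_conj βinv s0 φ) x] using h'
  have hWb12 : wronk βinv s0 phi1 (fun s => conj (phi2 s)) b = 0 :=
    wronk_zero βinv s0 b1 b2 hb12 _ _ b hphi1bc2 (hconjbc phi2 b1 b2 b hphi2bc2)
  have hWa12 : wronk βinv s0 phi1 (fun s => conj (phi2 s)) a = 0 :=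
    wronk_zero βinv s0 a1 a2 ha12 _ _ a hphi1bc1 (hconjbc phi2 a1 a2 a hphi2bc1)
  have hWb11 : wronk βinv s0 phi1 (fun s => conj (phi1 s)) b = 0 :=
    wronk_zero βinv s0 b1 b2 hb12 _ _ b hphi1bc2 (hconjbc phi1 b1 b2 b hphi1bc2)
  have hWa11 : wronk βinv s0 phi1 (fun s => conj (phi1 s)) a = 0 :=
    wronk_zero βinv s0 a1 a2 ha12 _ _ a hphi1bc1 (hconjbc phi1 a1 a2 a hphi1bc1)
  have hWb22 : wronk βinv s0 phi2 (fun s => conj (phi2 s)) b = 0 :=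
    wronk_zero βinv s0 b1 b2 hb12 _ _ b hphi2bc2 (hconjbc phi2 b1 b2 b hphi2bc2)
  have hWa22 : wronk βinv s0 phi2 (fun s => conj (phi2 s)) a = 0 :=
    wronk_zero βinv s0 a1 a2 ha12 _ _ a hphi2bc1 (hconjbc phi2 a1 a2 a hphi2bc1)
  have k12 := both_sides I hIconn β βinv s0 hmono hcont hbij hinv hs0I hfix hsign huniq
    a b ha hb has0 hs0b r phi1 phi2 lam1 lam2 hphi1L2a hphi1L2b hphi2L2a hphi2L2b
    hphi1c hphi2c hDphi1d hDphi2d hphi1eig hphi2eig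
  have k11 := both_sides I hIconn β βinv s0 hmono hcont hbij hinv hs0I hfix hsign huniq
    a b ha hb has0 hs0b r phi1 phi1 lam1 lam1 hphi1L2a hphi1L2b hphi1L2a hphi1L2b
    hphi1c hphi1c hDphi1d hDphi1d hphi1eig hphi1eig
  have k22 := both_sides I hIconn β βinv s0 hmono hcont hbij hinv hs0I hfix hsign huniq
    a b ha hb has0 hs0b r phi2 phi2 lam2 lam2 hphi2L2a hphi2L2b hphi2L2a hphi2L2b
    hphi2c hphi2c hDphi2d hDphi2d hphi2eig hphi2eig
  rw [hWb12, hWa12, sub_zero] at k12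
  rw [hWb11, hWa11, sub_zero] at k11
  rw [hWb22, hWa22, sub_zero] at k22
  have hcast : ∀ φ : ℝ → ℂ, betaIntAB β a b (fun t => φ t * conj (φ t))
      = ((betaIntRAB β a b fun t => ‖φ t‖ ^ 2 : ℝ) : ℂ) := by
    intro φ
    unfold betaIntAB betaIntRAB betaInt betaIntR
    rw [Complex.ofReal_sub, Complex.ofReal_tsum, Complex.ofReal_tsum]
    congr 1 <;>
    · apply tsum_congr
      intro k
      push_cast [Complex.mul_conj, Complex.normSq_eq_norm_sq]
      ring
  have hr1 : conj lam1 = lam1 := by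
    have hne : betaIntAB β a b (fun t => phi1 t * conj (phi1 t)) ≠ 0 := by
      rw [hcast]
      exact Complex.ofReal_ne_zero.2 (ne_of_gt hphi1pos)
    have h0 := (mul_eq_zero.1 k11).resolve_right hne
    exact (sub_eq_zero.1 h0).symm
  have hr2 : conj lam2 = lam2 := by
    have hne : betaIntAB β a b (fun t => phi2 t * conj (phi2 t)) ≠ 0 := by
      rw [hcast]
      exact Complex.ofReal_ne_zero.2 (ne_of_gt hphi2pos)
    have h0 := (mul_eq_zero.1 k22).resolve_right hne
    exact (sub_eq_zero.1 h0).symm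
  rw [hr2] at k12
  exact (mul_eq_zero.1 k12).resolve_left (sub_ne_zero.2 hlam)
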